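/- Let (a_k) and (b_k) be nondecreasing unbounded sequences of positive reals with a_k ≤ b_k for all k. Then there exists a nondecreasing unbounded sequence (u_k) of positive reals with a_k ≤ u_k ≤ b_k for all k, together with a strictly increasing sequence of indices (T_ℓ) such that u_{T_ℓ} = a_{T_ℓ} and u_{T_ℓ+1} = b_{T_ℓ+1} for every ℓ ≥ 1. -/
import Mathlib


open Filter

/-- Given nondecreasing unbounded sequences `a ≤ b` of positive reals, there is a
nondecreasing unbounded sequence `u` squeezed between them that touches `a` and `b`
along a strictly increasing sequence of indices. -/
theorem stmt1 (a b : ℕ → ℝ) (hapos : ∀ k, 0 < a k) (hbpos : ∀ k, 0 < b k)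
    (hamono : Monotone a) (hbmono : Monotone b)
    (haunb : Tendsto a atTop atTop) (hbunb : Tendsto b atTop atTop)
    (hab : ∀ k, a k ≤ b k) :
    ∃ u : ℕ → ℝ, (∀ k, 0 < u k) ∧ Monotone u ∧ Tendsto u atTop atTop ∧
      (∀ k, a k ≤ u k ∧ u k ≤ b k) ∧
      ∃ T : ℕ → ℕ, StrictMono T ∧
        ∀ ℓ, 1 ≤ ℓ → u (T ℓ) = a (T ℓ) ∧ u (T ℓ + 1) = b (T ℓ + 1) := by
  -- choose, for each M, an index where a exceeds M
  choose F hF using fun M : ℝ => (haunb.eventually_ge_atTop M).exists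
  -- recursive definition of the touching indices
  set T : ℕ → ℕ := fun ℓ => Nat.rec 0 (fun _ t => max (t + 1) (F (b (t + 1)))) ℓ with hT
  have hT0 : T 0 = 0 := rfl
  have hTsucc : ∀ ℓ, T (ℓ + 1) = max (T ℓ + 1) (F (b (T ℓ + 1))) := fun ℓ => rfl
  have hTmono : StrictMono T := strictMono_nat_of_lt_succ (fun ℓ => by
    rw [hTsucc]; exact lt_of_lt_of_le (Nat.lt_succ_self _) (le_max_left _ _))
  have hTkey : ∀ ℓ, b (T ℓ + 1) ≤ a (T (ℓ + 1)) := fun ℓ => by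
    calc b (T ℓ + 1) ≤ a (F (b (T ℓ + 1))) := hF _
    _ ≤ a (T (ℓ + 1)) := hamono (by rw [hTsucc]; exact le_max_right _ _)
  have hTge : ∀ ℓ, ℓ ≤ T ℓ := fun ℓ => hTmono.le_apply
  -- block index: largest ℓ with T ℓ < k
  set g : ℕ → ℕ := fun k => Nat.findGreatest (fun ℓ => T ℓ < k) k with hg
  have hgspec : ∀ k, 1 ≤ k → T (g k) < k := fun k hk =>
    Nat.findGreatest_spec (P := fun ℓ => T ℓ < k) (Nat.zero_le k)
      hk
  have hgmono : Monotone g := fun m n hmn =>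
    Nat.findGreatest_mono (fun ℓ hℓ => lt_of_lt_of_le hℓ hmn) hmn
  set u : ℕ → ℝ := fun k => if k = 0 then a 0 else max (a k) (b (T (g k) + 1)) with hu
  have hau : ∀ k, a k ≤ u k := fun k => by
    rcases Nat.eq_zero_or_pos k with h | h
    · subst h; simp [hu]
    · simp only [hu, Nat.pos_iff_ne_zero.mp h, if_neg (Nat.pos_iff_ne_zero.mp h)]
      exact le_max_left _ _
  have hub : ∀ k, u k ≤ b k := fun k => by
    rcases Nat.eq_zero_or_pos k with h | h
    · subst h; simpa [hu] using hab 0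
    · have hk : k ≠ 0 := Nat.pos_iff_ne_zero.mp h
      simp only [hu, if_neg hk]
      exact max_le (hab k) (hbmono (hgspec k h))
  have humono : Monotone u := by
    apply monotone_nat_of_le_succ
    intro k
    rcases Nat.eq_zero_or_pos k with h | h
    · subst h
      calc u 0 = a 0 := by simp [hu]
      _ ≤ a 1 := hamono (Nat.zero_le 1)
      _ ≤ u 1 := hau 1
    · have hk : k ≠ 0 := Nat.pos_iff_ne_zero.mp h
      simp only [hu, if_neg hk, if_neg (Nat.succ_ne_zero k)]
      exact max_le_max (hamono (Nat.le_succ k))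
        (hbmono (Nat.succ_le_succ (hTmono.monotone (hgmono (Nat.le_succ k)))))
  refine ⟨u, fun k => lt_of_lt_of_le (hapos k) (hau k), humono,
    tendsto_atTop_mono hau haunb, fun k => ⟨hau k, hub k⟩, T, hTmono, ?_⟩
  intro ℓ hℓ
  have hTℓpos : 1 ≤ T ℓ := le_trans hℓ (hTge ℓ)
  constructor
  · -- u (T ℓ) = a (T ℓ)
    have hgTℓ : g (T ℓ) = ℓ - 1 := by
      rw [hg]
      apply Nat.findGreatest_eq_iff.mpr
      refine ⟨le_trans (Nat.sub_le ℓ 1) (hTge ℓ), fun _ => hTmono (Nat.sub_lt hℓ one_pos),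
        fun n hn _ h => ?_⟩
      exact absurd (hTmono.lt_iff_lt.mp h) (not_lt.mpr (Nat.le_of_pred_lt hn))
    have hkey : b (T (g (T ℓ)) + 1) ≤ a (T ℓ) := by
      rw [hgTℓ]
      have := hTkey (ℓ - 1)
      rwa [Nat.sub_add_cancel hℓ] at this
    simp only [hu, if_neg (Nat.pos_iff_ne_zero.mp hTℓpos)]
    exact max_eq_left hkey
  · -- u (T ℓ + 1) = b (T ℓ + 1)
    have hgTℓ1 : g (T ℓ + 1) = ℓ := by
      rw [hg]
      apply Nat.findGreatest_eq_iff.mpr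
      refine ⟨le_trans (hTge ℓ) (Nat.le_succ _), fun _ => Nat.lt_succ_self _,
        fun n hn _ h => ?_⟩
      exact absurd h (not_lt.mpr (le_trans (Nat.succ_le_of_lt (hTmono (Nat.lt_succ_self ℓ))) (hTmono.monotone (Nat.succ_le_of_lt hn))))
    simp only [hu, if_neg (Nat.succ_ne_zero _), hgTℓ1]
    exact max_eq_right (hab _)
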